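/- If 0 < |γ| < 1, then the matrix series Σ_{ℓ=0}^∞ γ^ℓ·D^{1−β}·(D^{−1}·A)^ℓ·D^{β−1} converges and its sum equals (I − γ·P)^{−1}; in particular P^ℓ = D^{1−β}·(D^{−1}·A)^ℓ·D^{β−1} for every ℓ ≥ 0. -/

import Mathlib

open Finset Matrix

/-- Weighted degree of node `i`. -/
noncomputable def deg {n : ℕ} (w : Fin n → Fin n → ℝ) (i : Fin n) : ℝ := ∑ j, w i j

/-- The diagonal matrix `D^t` whose `(i,i)`-entry is `d(i)^t` (real power). -/
noncomputable def Dpow {n : ℕ} (w : Fin n → Fin n → ℝ) (t : ℝ) :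
    Matrix (Fin n) (Fin n) ℝ :=
  Matrix.diagonal fun i => deg w i ^ t

/-- The propagation matrix `P = D^{-β} A D^{β-1}`. -/
noncomputable def propP {n : ℕ} (w : Fin n → Fin n → ℝ) (β : ℝ) :
    Matrix (Fin n) (Fin n) ℝ :=
  Dpow w (-β) * Matrix.of w * Dpow w (β - 1)

section Aux

variable {n : ℕ}

lemma Dpow_mul_Dpow (w : Fin n → Fin n → ℝ) (hd : ∀ i, 0 < deg w i) (a b : ℝ) :
    Dpow w a * Dpow w b = Dpow w (a + b) := by
  have h : (fun i => deg w i ^ a * deg w i ^ b) = fun i => deg w i ^ (a + b) :=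
    funext fun i => (Real.rpow_add (hd i) a b).symm
  rw [Dpow, Dpow, Dpow, diagonal_mul_diagonal, h]

lemma Dpow_zero (w : Fin n → Fin n → ℝ) : Dpow w 0 = 1 := by
  simp [Dpow]

lemma propP_conj (w : Fin n → Fin n → ℝ) (hd : ∀ i, 0 < deg w i) (β : ℝ) :
    propP w β = Dpow w (1 - β) * (Dpow w (-1) * Matrix.of w) * Dpow w (β - 1) := by
  rw [propP, ← mul_assoc, Dpow_mul_Dpow w hd, show (1 - β) + (-1) = -β by ring]

lemma propP_pow (w : Fin n → Fin n → ℝ) (hd : ∀ i, 0 < deg w i) (β : ℝ) (ℓ : ℕ) :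
    propP w β ^ ℓ = Dpow w (1 - β) * (Dpow w (-1) * Matrix.of w) ^ ℓ * Dpow w (β - 1) := by
  have h21 : Dpow w (β - 1) * Dpow w (1 - β) = 1 := by
    rw [Dpow_mul_Dpow w hd]; norm_num [Dpow_zero]
  induction ℓ with
  | zero =>
    simp only [pow_zero, mul_one]
    rw [Dpow_mul_Dpow w hd]; norm_num [Dpow_zero]
  | succ k ih =>
    rw [pow_succ, pow_succ, ih, propP_conj w hd β]
    have : ∀ X Y : Matrix (Fin n) (Fin n) ℝ,
        (Dpow w (1 - β) * X * Dpow w (β - 1)) * (Dpow w (1 - β) * Y * Dpow w (β - 1))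
          = Dpow w (1 - β) * (X * Y) * Dpow w (β - 1) := by
      intro X Y
      calc (Dpow w (1 - β) * X * Dpow w (β - 1)) * (Dpow w (1 - β) * Y * Dpow w (β - 1))
          = Dpow w (1 - β) * X * (Dpow w (β - 1) * Dpow w (1 - β)) * Y * Dpow w (β - 1) := by
            noncomm_ring
        _ = _ := by rw [h21]; noncomm_ring
    exact this _ _

attribute [local instance] Matrix.linftyOpNormedRing Matrix.linftyOpNormedAlgebra

noncomputable local instance : CompleteSpace (Matrix (Fin n) (Fin n) ℝ) :=
  by infer_instance

lemma norm_S_le_one (w : Fin n → Fin n → ℝ) (hnn : ∀ i j, 0 ≤ w i j)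
    (hd : ∀ i, 0 < deg w i) :
    ‖Dpow w (-1) * Matrix.of w‖ ≤ 1 := by
  rw [Matrix.linfty_opNorm_def]
  have : ((Finset.univ : Finset (Fin n)).sup
      fun i => ∑ j, ‖(Dpow w (-1) * Matrix.of w) i j‖₊ : NNReal) ≤ 1 := by
    apply Finset.sup_le
    intro i _
    have hentry : ∀ j, (Dpow w (-1) * Matrix.of w) i j = (deg w i)⁻¹ * w i j := by
      intro j
      simp [Dpow, Matrix.diagonal_mul, Real.rpow_neg_one]
    rw [← NNReal.coe_le_coe]
    push_cast
    have : ∑ j, ‖(Dpow w (-1) * Matrix.of w) i j‖ = (deg w i)⁻¹ * ∑ j, w i j := by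
      rw [Finset.mul_sum]
      refine Finset.sum_congr rfl fun j _ => ?_
      rw [hentry j, Real.norm_eq_abs,
        abs_of_nonneg (mul_nonneg (inv_nonneg.2 (hd i).le) (hnn i j))]
    rw [this]
    rw [show (∑ j, w i j) = deg w i from rfl, inv_mul_cancel₀ (hd i).ne']
  exact_mod_cast this

lemma main_aux (w : Fin n → Fin n → ℝ) (hnn : ∀ i j, 0 ≤ w i j)
    (hd : ∀ i, 0 < deg w i) (β γ : ℝ) (hγ1 : |γ| < 1) :
    HasSum
      (fun ℓ : ℕ =>
        γ ^ ℓ • (Dpow w (1 - β) * (Dpow w (-1) * Matrix.of w) ^ ℓ * Dpow w (β - 1)))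
      ((1 : Matrix (Fin n) (Fin n) ℝ) - γ • propP w β)⁻¹ := by
  set S := Dpow w (-1) * Matrix.of w with hS
  set D1 := Dpow w (1 - β) with hD1
  set D2 := Dpow w (β - 1) with hD2
  have h21 : D2 * D1 = 1 := by
    rw [hD1, hD2, Dpow_mul_Dpow w hd]; norm_num [Dpow_zero]
  have h12 : D1 * D2 = 1 := by
    rw [hD1, hD2, Dpow_mul_Dpow w hd]; norm_num [Dpow_zero]
  have hnorm : ‖γ • S‖ < 1 := by
    rw [norm_smul, Real.norm_eq_abs]
    calc |γ| * ‖S‖ ≤ |γ| * 1 := by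
          have := norm_S_le_one w hnn hd
          exact mul_le_mul_of_nonneg_left this (abs_nonneg γ)
      _ < 1 := by simpa using hγ1
  have hsum : Summable (fun ℓ : ℕ => (γ • S) ^ ℓ) :=
    summable_geometric_of_norm_lt_one hnorm
  have hT := hsum.hasSum
  set T := ∑' ℓ : ℕ, (γ • S) ^ ℓ with hTdef
  have hTinv : (1 - γ • S) * T = 1 := mul_neg_geom_series _ hnorm
  have hfinal : HasSum (fun ℓ : ℕ => D1 * (γ • S) ^ ℓ * D2) (D1 * T * D2) :=
    (hT.mul_left D1).mul_right D2
  have hterm : ∀ ℓ : ℕ, D1 * (γ • S) ^ ℓ * D2 = γ ^ ℓ • (D1 * S ^ ℓ * D2) := by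
    intro ℓ
    rw [smul_pow, mul_smul_comm, smul_mul_assoc]
  have hval : ((1 : Matrix (Fin n) (Fin n) ℝ) - γ • propP w β)⁻¹ = D1 * T * D2 := by
    apply Matrix.inv_eq_right_inv
    have hP : (1 : Matrix (Fin n) (Fin n) ℝ) - γ • propP w β = D1 * (1 - γ • S) * D2 := by
      rw [propP_conj w hd β, mul_sub, sub_mul, mul_one, h12, mul_smul_comm, smul_mul_assoc]
    rw [hP]
    calc D1 * (1 - γ • S) * D2 * (D1 * T * D2)
        = D1 * (1 - γ • S) * (D2 * D1) * T * D2 := by noncomm_ring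
      _ = D1 * ((1 - γ • S) * T) * D2 := by rw [h21]; noncomm_ring
      _ = 1 := by rw [hTinv, mul_one, h12]
  rw [hval]
  exact hfinal.congr_fun fun ℓ => (hterm ℓ).symm

end Aux

/-- If `0 < |γ| < 1`, the series `∑_{ℓ≥0} γ^ℓ D^{1-β} (D⁻¹ A)^ℓ D^{β-1}` converges
to `(I - γ P)⁻¹`; in particular `P^ℓ = D^{1-β} (D⁻¹ A)^ℓ D^{β-1}` for all `ℓ`. -/
theorem neumann_series_propP {n : ℕ} (hn : 1 ≤ n) (w : Fin n → Fin n → ℝ)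
    (hsym : ∀ i j, w i j = w j i) (hnn : ∀ i j, 0 ≤ w i j)
    (hdiag : ∀ i, w i i = 0) (hd : ∀ i, 0 < deg w i)
    (β γ : ℝ) (hβ0 : 0 ≤ β) (hβ1 : β ≤ 1)
    (hγ0 : 0 < |γ|) (hγ1 : |γ| < 1) :
    HasSum
      (fun ℓ : ℕ =>
        γ ^ ℓ • (Dpow w (1 - β) * (Dpow w (-1) * Matrix.of w) ^ ℓ * Dpow w (β - 1)))
      ((1 : Matrix (Fin n) (Fin n) ℝ) - γ • propP w β)⁻¹ ∧
    ∀ ℓ : ℕ,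
      propP w β ^ ℓ = Dpow w (1 - β) * (Dpow w (-1) * Matrix.of w) ^ ℓ * Dpow w (β - 1) := by
  exact ⟨main_aux w hnn hd β γ hγ1, propP_pow w hd β⟩
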